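/- Let λ: R' → R be a surjective semiring homomorphism, φ: V' → V a surjective λ-semilinear map from a free R'-module V' to an R-module V. Then every quadratic form q: V → R can be lifted to a quadratic form q': V' → R' such that λ ∘ q' = q ∘ φ. -/

import Mathlib

/-- A (not necessarily symmetric) `R`-bilinear form on `V`. -/
def IsBilin {R : Type*} [CommSemiring R] {V : Type*} [AddCommMonoid V] [Module R V]
    (b : V → V → R) : Prop :=
  (∀ x y z : V, b (x + y) z = b x z + b y z) ∧
  (∀ x y z : V, b x (y + z) = b x y + b x z) ∧
  (∀ (c : R) (x y : V), b (c • x) y = c * b x y) ∧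
  (∀ (c : R) (x y : V), b x (c • y) = c * b x y)

/-- `b` is a (symmetric bilinear) companion of `q`. -/
def IsCompanion {R : Type*} [CommSemiring R] {V : Type*} [AddCommMonoid V] [Module R V]
    (q : V → R) (b : V → V → R) : Prop :=
  IsBilin b ∧ (∀ x y : V, b x y = b y x) ∧ ∀ x y : V, q (x + y) = q x + q y + b x y

/-- `q` is a quadratic form: homogeneous of degree 2 and admitting some companion. -/
def IsQuadForm {R : Type*} [CommSemiring R] {V : Type*} [AddCommMonoid V] [Module R V]
    (q : V → R) : Prop :=
  (∀ (c : R) (x : V), q (c • x) = c ^ 2 * q x) ∧ ∃ b, IsCompanion q b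

variable {R : Type*} [CommSemiring R] {V : Type*} [AddCommMonoid V] [Module R V]

/-- Every quadratic form on `V` can be lifted through a surjective semilinear map from a
free module. -/
theorem stmt8 {R' : Type*} [CommSemiring R'] {V' : Type*} [AddCommMonoid V'] [Module R' V']
    {I : Type*} (lam : R' →+* R) (hlam : Function.Surjective lam)
    (ε' : Module.Basis I R' V') (φ : V' → V)
    (hadd : ∀ x y : V', φ (x + y) = φ x + φ y)
    (hsmul : ∀ (a : R') (x : V'), φ (a • x) = lam a • φ x)
    (hsurj : Function.Surjective φ)
    (q : V → R) (hq : IsQuadForm q) :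
    ∃ q' : V' → R', IsQuadForm q' ∧ ∀ x' : V', lam (q' x') = q (φ x') := by
  classical
  obtain ⟨hq2, b, ⟨hb1, hb2, hb3, hb4⟩, hbsymm, hbcomp⟩ := hq
  letI : LinearOrder I := linearOrderOfSTO WellOrderingRel
  -- basic facts
  have φ0 : φ 0 = 0 := by
    have := hsmul 0 0
    simpa using this
  have q0 : q 0 = 0 := by
    have := hq2 0 0
    simpa using this
  have bx0 : ∀ x : V, b x 0 = 0 := fun x => by
    have := hb4 0 x 0
    simpa using this
  -- choices of preimages
  set v : I → V := fun i => φ (ε' i) with hv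
  have hd : ∀ i, lam ((hlam (q (v i))).choose) = q (v i) := fun i =>
    (hlam (q (v i))).choose_spec
  set d : I → R' := fun i => (hlam (q (v i))).choose with hdd
  have hcb : ∀ i j, lam ((hlam (b (v i) (v j))).choose) = b (v i) (v j) := fun i j =>
    (hlam (b (v i) (v j))).choose_spec
  set cb : I → I → R' := fun i j => (hlam (b (v i) (v j))).choose with hcbb
  set c : I → I → R' := fun i j =>
    if i = j then d i else if i < j then cb i j else 0 with hc
  -- key: sum of c i j and c j i maps to b (v i) (v j) for i ≠ j
  have hcsum : ∀ i j, i ≠ j → lam (c i j) + lam (c j i) = b (v i) (v j) := by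
    intro i j hij
    rcases lt_trichotomy i j with h | h | h
    · simp only [hc, if_neg hij, if_pos h, if_neg (Ne.symm hij), if_neg (not_lt_of_gt h)]
      simpa using hcb i j
    · exact absurd h hij
    · simp only [hc, if_neg hij, if_neg (not_lt_of_gt h), if_neg (Ne.symm hij), if_pos h]
      rw [map_zero, zero_add, hcb j i]
      exact hbsymm _ _
  have hcdiag : ∀ i, lam (c i i) = q (v i) := by
    intro i
    simp only [hc, if_pos rfl]
    exact hd i
  -- the bilinear map
  set B : V' →ₗ[R'] V' →ₗ[R'] R' :=
    ε'.constr R' fun i => ε'.constr R' fun j => c i j with hB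
  have hBij : ∀ i j, B (ε' i) (ε' j) = c i j := by
    intro i j
    rw [hB, Module.Basis.constr_basis, Module.Basis.constr_basis]
  refine ⟨fun x => B x x, ⟨?_, ⟨fun x y => B x y + B y x, ⟨?_, ?_, ?_, ?_⟩, ?_, ?_⟩⟩, ?_⟩
  · intro a x
    simp only [map_smul, LinearMap.smul_apply, smul_eq_mul, pow_two]
    ring
  · intro x y z; simp only [map_add, LinearMap.add_apply]; ring
  · intro x y z; simp only [map_add, LinearMap.add_apply]; ring
  · intro a x y; simp only [map_smul, LinearMap.smul_apply, smul_eq_mul]; ring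
  · intro a x y; simp only [map_smul, LinearMap.smul_apply, smul_eq_mul]; ring
  · intro x y; ring
  · intro x y; simp only [map_add, LinearMap.add_apply]; ring
  -- the main computation
  intro x'
  -- sums
  have φsum : ∀ (s : Finset I) (a : I → R'),
      φ (∑ i ∈ s, a i • ε' i) = ∑ i ∈ s, lam (a i) • v i := by
    intro s a
    induction s using Finset.induction with
    | empty => simpa using φ0
    | insert _ _ hi ih =>
      rw [Finset.sum_insert hi, Finset.sum_insert hi, hadd, hsmul, ih]
  have bsum : ∀ (x : V) (s : Finset I) (w : I → V),
      b x (∑ i ∈ s, w i) = ∑ i ∈ s, b x (w i) := by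
    intro x s w
    induction s using Finset.induction with
    | empty => simpa using bx0 x
    | insert _ _ hi ih =>
      rw [Finset.sum_insert hi, Finset.sum_insert hi, hb2, ih]
  have key : ∀ (s : Finset I) (a : I → R'),
      lam (B (∑ i ∈ s, a i • ε' i) (∑ i ∈ s, a i • ε' i))
        = q (φ (∑ i ∈ s, a i • ε' i)) := by
    intro s a
    induction s using Finset.induction with
    | empty => simp [φ0, q0]
    | @insert i s hi ih =>
      have hBiS : ∀ k, B (ε' k) (∑ j ∈ s, a j • ε' j) = ∑ j ∈ s, a j * c k j := by
        intro k
        rw [map_sum]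
        exact Finset.sum_congr rfl fun j _ => by rw [map_smul, hBij]; rfl
      have hBSi : ∀ k, B (∑ j ∈ s, a j • ε' j) (ε' k) = ∑ j ∈ s, a j * c j k := by
        intro k
        rw [map_sum, LinearMap.sum_apply]
        exact Finset.sum_congr rfl fun j _ => by
          rw [map_smul, LinearMap.smul_apply, hBij]; rfl
      rw [Finset.sum_insert hi]
      -- expand LHS
      simp only [map_add, LinearMap.add_apply, map_smul, LinearMap.smul_apply,
        smul_eq_mul, hBij, hBiS, hBSi]
      -- RHS
      rw [hadd, hsmul, hbcomp, hq2, ← ih, φsum, bsum]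
      simp only [hb3, hb4, hv]
      have e1 : lam (∑ j ∈ s, a j * c i j) + lam (∑ j ∈ s, a j * c j i)
          = ∑ j ∈ s, lam (a j) * b (φ (ε' i)) (φ (ε' j)) := by
        rw [map_sum, map_sum, ← Finset.sum_add_distrib]
        refine Finset.sum_congr rfl fun j hj => ?_
        have hij : i ≠ j := fun h => hi (h ▸ hj)
        have h2 := hcsum i j hij
        simp only [hv] at h2
        rw [map_mul, map_mul, ← mul_add, h2]
      have e2 : lam (c i i) = q (φ (ε' i)) := by simpa [hv] using hcdiag i
      rw [← Finset.mul_sum, ← e1]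
      simp only [map_mul, map_add, e2, pow_two]
      ring
  have hrepr : x' = ∑ i ∈ (ε'.repr x').support, (ε'.repr x') i • ε' i := by
    conv_lhs => rw [← ε'.linearCombination_repr x']
    rw [Finsupp.linearCombination_apply, Finsupp.sum]
  rw [hrepr]
  exact key _ _
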